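/- For every m ≥ 1, the minimum Wheeler DFA recognizing the language L_m = {cαe : α ∈ {a,b}^m} ∪ {dαf : α ∈ {a,b}^m} has at least 2^{m+2} states, while L_m is recognized by a DFA with O(m) states. Consequently, the minimum Wheeler DFA equivalent to an acyclic DFA with n states has Ω(2^{n/4}) states in the worst case. -/

import Mathlib

variable {V : Type*} {A : Type*}

/-- `Reaches E s α v`: the string `α` labels a path in the labeled graph `E`
from the state `s` to the state `v`. -/
inductive Reaches (E : V → A → V → Prop) (s : V) : List A → V → Prop
  | nil : Reaches E s [] s
  | snoc {α : List A} {u w : V} {a : A} :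
      Reaches E s α u → E u a w → Reaches E s (α ++ [a]) w

/-- Co-lexicographic (strict) order on strings: lexicographic order of reverses. -/
def ColexLt [LinearOrder A] (α β : List A) : Prop :=
  List.Lex (· < ·) α.reverse β.reverse

/-- `r` is a strict total order. -/
def StrictTotal (r : V → V → Prop) : Prop :=
  (∀ x, ¬ r x x) ∧ (∀ x y z, r x y → r y z → r x z) ∧
  (∀ x y : V, x ≠ y → r x y ∨ r y x)

/-- `r` is a Wheeler order for the labeled graph `E`: a strict total order on states
such that in-degree-0 states precede all states with positive in-degree, edges with
strictly smaller labels point to strictly smaller states, and equally-labeled edges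
from ordered sources point to weakly ordered targets. -/
def WheelerRel [LinearOrder A] (E : V → A → V → Prop) (r : V → V → Prop) : Prop :=
  StrictTotal r ∧
  (∀ x w : V, (∀ u a, ¬ E u a x) → (∃ u a, E u a w) → r x w) ∧
  (∀ u₁ a₁ v₁ u₂ a₂ v₂, E u₁ a₁ v₁ → E u₂ a₂ v₂ → a₁ < a₂ → r v₁ v₂) ∧
  (∀ u₁ v₁ u₂ v₂ a, E u₁ a v₁ → E u₂ a v₂ → r u₁ u₂ → r v₁ v₂ ∨ v₁ = v₂)

/-- The language accepted by the automaton `(V, E, F, s)`. -/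
def Lang (E : V → A → V → Prop) (F : Set V) (s : V) : Set (List A) :=
  {α | ∃ w ∈ F, Reaches E s α w}

/-- `Pref(L(A))`: the set of prefixes of accepted strings. -/
def PrefL (E : V → A → V → Prop) (F : Set V) (s : V) : Set (List A) :=
  {α | ∃ β, α ++ β ∈ Lang E F s}

/-- `I_u`: the strings in `Pref(L(A))` labeling a path from `s` to `u`. -/
def Iset (E : V → A → V → Prop) (F : Set V) (s u : V) : Set (List A) :=
  {α | α ∈ PrefL E F s ∧ Reaches E s α u}

/-- `I_α`: the set of states reached from `s` by a path labeled `α`. -/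
def Istr (E : V → A → V → Prop) (s : V) (α : List A) : Set V :=
  {w | Reaches E s α w}

/-- The language `L_m = {cαe : α ∈ {a,b}^m} ∪ {dαf : α ∈ {a,b}^m}` over the
alphabet `{a,b,c,d,e,f}` encoded as `Fin 6` (a = 0, b = 1, c = 2, d = 3, e = 4,
f = 5). -/
def Lm (m : ℕ) : Set (List (Fin 6)) :=
  {w | ∃ α : List (Fin 6), α.length = m ∧ (∀ x ∈ α, x = 0 ∨ x = 1) ∧
        (w = 2 :: (α ++ [4]) ∨ w = 3 :: (α ++ [5]))}

lemma reaches_nil_inv {E : V → A → V → Prop} {s v : V} (h : Reaches E s [] v) : v = s := by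
  generalize hw : ([] : List A) = w at h
  cases h with
  | nil => rfl
  | snoc h' e => simp at hw

lemma reaches_snoc_inv {E : V → A → V → Prop} {s v : V} {α : List A} {a : A}
    (h : Reaches E s (α ++ [a]) v) : ∃ u, Reaches E s α u ∧ E u a v := by
  generalize hw : α ++ [a] = w at h
  cases h with
  | nil => simp at hw
  | @snoc β u w b h' e =>
      obtain ⟨h1, h2⟩ := List.append_inj' hw.symm rfl
      subst h1
      obtain rfl : b = a := by simpa using h2
      exact ⟨u, h', e⟩

lemma reaches_append {E : V → A → V → Prop} {s u v : V} {α β : List A}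
    (h1 : Reaches E s α u) (h2 : Reaches E u β v) : Reaches E s (α ++ β) v := by
  induction h2 with
  | nil => simpa using h1
  | snoc h e ih => rw [← List.append_assoc]; exact Reaches.snoc ih e

lemma reaches_split {E : V → A → V → Prop} {s v : V} {α β : List A}
    (h : Reaches E s (α ++ β) v) : ∃ u, Reaches E s α u ∧ Reaches E u β v := by
  induction β using List.reverseRecOn generalizing v with
  | nil => exact ⟨v, by simpa using h, Reaches.nil⟩
  | append_singleton β b ih =>
      rw [← List.append_assoc] at h
      obtain ⟨w, hw, e⟩ := reaches_snoc_inv h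
      obtain ⟨u, hu, hw'⟩ := ih hw
      exact ⟨u, hu, Reaches.snoc hw' e⟩

lemma reaches_det {E : V → A → V → Prop} (hdet : ∀ u a v v', E u a v → E u a v' → v = v')
    {s u v : V} {α : List A} (h1 : Reaches E s α u) (h2 : Reaches E s α v) : u = v := by
  induction α using List.reverseRecOn generalizing u v with
  | nil => rw [reaches_nil_inv h1, reaches_nil_inv h2]
  | append_singleton β b ih =>
      obtain ⟨u', hu', e'⟩ := reaches_snoc_inv h1
      obtain ⟨v', hv', e''⟩ := reaches_snoc_inv h2
      obtain rfl := ih hu' hv'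
      exact hdet _ _ _ _ e' e''

lemma reaches_ne_nil_edge {E : V → A → V → Prop} {s v : V} {α : List A}
    (h : Reaches E s α v) (hne : α ≠ []) : ∃ u a, E u a v := by
  obtain ⟨β, b, rfl⟩ := (List.eq_nil_or_concat α).resolve_left hne
  rw [List.concat_eq_append] at h
  obtain ⟨u, _, e⟩ := reaches_snoc_inv h
  exact ⟨u, b, e⟩

-- colex helpers
lemma colex_snoc_inv [LinearOrder A] {α β : List A} {a b : A}
    (h : ColexLt (α ++ [a]) (β ++ [b])) : a < b ∨ (a = b ∧ ColexLt α β) := by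
  unfold ColexLt at h ⊢
  simp only [List.reverse_append, List.reverse_singleton, List.singleton_append] at h
  cases h with
  | rel hr => exact Or.inl hr
  | cons ht => exact Or.inr ⟨rfl, ht⟩

lemma lex_append_right [Preorder A] (l : List A) {x y : A} (h : x < y) (t₁ t₂ : List A) :
    List.Lex (· < ·) (l ++ x :: t₁) (l ++ y :: t₂) := by
  induction l with
  | nil => exact List.Lex.rel h
  | cons c l ih => exact List.Lex.cons ih

lemma colex_snoc [LinearOrder A] (α : List A) {x y : A} (h : x < y) :
    ColexLt (α ++ [x]) (α ++ [y]) := by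
  unfold ColexLt
  simp only [List.reverse_append, List.reverse_singleton, List.singleton_append]
  exact List.Lex.rel h

lemma lex_append_of_length_eq [Preorder A] {l₁ l₂ : List A}
    (h : List.Lex (· < ·) l₁ l₂) (hlen : l₁.length = l₂.length) (t₁ t₂ : List A) :
    List.Lex (· < ·) (l₁ ++ t₁) (l₂ ++ t₂) := by
  induction h with
  | nil => simp at hlen
  | rel hr => exact List.Lex.rel hr
  | cons h ih => exact List.Lex.cons (ih (by simpa using hlen))

-- key Wheeler lemma: colex order of reaching strings weakly orders states
lemma wheeler_order [LinearOrder A] {E : V → A → V → Prop} {s : V} {r : V → V → Prop}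
    (hs : ∀ u a, ¬ E u a s)
    (hW : (∀ x w : V, (∀ u a, ¬ E u a x) → (∃ u a, E u a w) → r x w) ∧
      (∀ u₁ a₁ v₁ u₂ a₂ v₂, E u₁ a₁ v₁ → E u₂ a₂ v₂ → a₁ < a₂ → r v₁ v₂) ∧
      (∀ u₁ v₁ u₂ v₂ a, E u₁ a v₁ → E u₂ a v₂ → r u₁ u₂ → r v₁ v₂ ∨ v₁ = v₂))
    (hdet : ∀ u a v v', E u a v → E u a v' → v = v') :
    ∀ (α β : List A) (u v : V), Reaches E s α u → Reaches E s β v → ColexLt α β →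
      r u v ∨ u = v := by
  intro α
  induction α using List.reverseRecOn with
  | nil =>
      intro β u v h1 h2 hlt
      obtain rfl := reaches_nil_inv h1
      rcases eq_or_ne β [] with rfl | hne
      · exact Or.inr (reaches_nil_inv h2).symm
      · exact Or.inl (hW.1 _ _ hs (reaches_ne_nil_edge h2 hne))
  | append_singleton α a ih =>
      intro β u v h1 h2 hlt
      rcases eq_or_ne β [] with rfl | hne
      · exact absurd hlt (by unfold ColexLt; simp [List.Lex])
      · obtain ⟨β', b, rfl⟩ := (List.eq_nil_or_concat β).resolve_left hne
        rw [List.concat_eq_append] at h2 hlt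
        obtain ⟨u', hu', e₁⟩ := reaches_snoc_inv h1
        obtain ⟨v', hv', e₂⟩ := reaches_snoc_inv h2
        rcases colex_snoc_inv hlt with hab | ⟨rfl, hcl⟩
        · exact Or.inl (hW.2.1 _ _ _ _ _ _ e₁ e₂ hab)
        · rcases ih _ _ _ hu' hv' hcl with hr | rfl
          · exact hW.2.2 _ _ _ _ _ e₁ e₂ hr
          · exact Or.inr (hdet _ _ _ _ e₁ e₂)


def hd6 (b : Bool) : Fin 6 := if b then 3 else 2
def tl6 (b : Bool) : Fin 6 := if b then 5 else 4

lemma mem_Lm (m : ℕ) (B : List (Fin 6)) (hB : ∀ x ∈ B, x = 0 ∨ x = 1)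
    (hk : B.length ≤ m) (b : Bool) :
    (hd6 b :: B) ++ (List.replicate (m - B.length) 0 ++ [tl6 b]) ∈ Lm m := by
  refine ⟨B ++ List.replicate (m - B.length) 0, by simp; omega, ?_, ?_⟩
  · intro x hx
    rcases List.mem_append.mp hx with h | h
    · exact hB x h
    · exact Or.inl (List.eq_of_mem_replicate h)
  · cases b
    · left; simp [hd6, tl6]
    · right; simp [hd6, tl6]

lemma Lm_len (m : ℕ) {w : List (Fin 6)} (h : w ∈ Lm m) : w.length = m + 2 := by
  obtain ⟨α, hl, _, h | h⟩ := h <;> simp [h, hl]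

lemma Lm_not_34 (m : ℕ) (δ : List (Fin 6)) : (3 : Fin 6) :: (δ ++ [4]) ∉ Lm m := by
  rintro ⟨α, hl, hb, h | h⟩
  · exact absurd (List.head_eq_of_cons_eq h) (by decide)
  · have h2 := (List.append_inj' (List.tail_eq_of_cons_eq h) rfl).2
    exact absurd (List.head_eq_of_cons_eq h2) (by decide)

lemma Lm_not_25 (m : ℕ) (δ : List (Fin 6)) : (2 : Fin 6) :: (δ ++ [5]) ∉ Lm m := by
  rintro ⟨α, hl, hb, h | h⟩
  · have h2 := (List.append_inj' (List.tail_eq_of_cons_eq h) rfl).2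
    exact absurd (List.head_eq_of_cons_eq h2) (by decide)
  · exact absurd (List.head_eq_of_cons_eq h) (by decide)

lemma lex_total' {A : Type*} [LinearOrder A] : ∀ {l₁ l₂ : List A}, l₁ ≠ l₂ →
    List.Lex (· < ·) l₁ l₂ ∨ List.Lex (· < ·) l₂ l₁ := by
  intro l₁
  induction l₁ with
  | nil =>
      intro l₂ h
      cases l₂ with
      | nil => exact absurd rfl h
      | cons b t => exact Or.inl List.Lex.nil
  | cons a t ih =>
      intro l₂ h
      cases l₂ with
      | nil => exact Or.inr List.Lex.nil
      | cons b t' =>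
          rcases lt_trichotomy a b with hab | rfl | hab
          · exact Or.inl (List.Lex.rel hab)
          · rcases ih (fun he => h (by rw [he])) with h' | h'
            · exact Or.inl (List.Lex.cons h')
            · exact Or.inr (List.Lex.cons h')
          · exact Or.inr (List.Lex.rel hab)

lemma sum_range_two_pow (n : ℕ) : ∑ i ∈ Finset.range n, 2 ^ i = 2 ^ n - 1 := by
  induction n with
  | zero => simp
  | succ n ih =>
      rw [Finset.sum_range_succ, ih, pow_succ]
      have := Nat.one_le_two_pow (n := n)
      omega

def TT (m : ℕ) := Option (Option (Bool × Σ k : Fin (m+1), Fin k → Bool))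

instance TTfin (m : ℕ) : Fintype (TT m) := by unfold TT; infer_instance

lemma card_TT (m : ℕ) : Fintype.card (TT m) = 2 ^ (m + 2) := by
  have h1 : Fintype.card (Σ k : Fin (m+1), Fin (k : ℕ) → Bool) = 2 ^ (m+1) - 1 := by
    rw [Fintype.card_sigma]
    have : ∀ k : Fin (m+1), Fintype.card (Fin (k:ℕ) → Bool) = 2 ^ (k:ℕ) := by
      intro k; simp [Fintype.card_fun]
    rw [Finset.sum_congr rfl (fun k _ => this k), Fin.sum_univ_eq_sum_range, sum_range_two_pow]
  show Fintype.card (Option (Option (Bool × Σ k : Fin (m+1), Fin (k:ℕ) → Bool))) = _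
  rw [Fintype.card_option, Fintype.card_option, Fintype.card_prod, h1]
  have := Nat.one_le_two_pow (n := m + 1)
  have h2 : 2 ^ (m+2) = 2 * 2 ^ (m+1) := by ring
  simp only [Fintype.card_bool]
  omega

def encB {k : ℕ} (g : Fin k → Bool) : List (Fin 6) := List.ofFn (fun i => if g i then 1 else 0)

lemma encB_len {k : ℕ} (g : Fin k → Bool) : (encB g).length = k := by simp [encB]

lemma encB_bin {k : ℕ} (g : Fin k → Bool) : ∀ x ∈ encB g, x = 0 ∨ x = 1 := by
  intro x hx
  obtain ⟨i, hi⟩ := List.mem_ofFn.mp hx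
  cases h : g i <;> rw [h] at hi <;> simp at hi <;> [left; right] <;> omega

lemma encB_inj {k : ℕ} {g₁ g₂ : Fin k → Bool} (h : encB g₁ = encB g₂) : g₁ = g₂ := by
  funext i
  have := List.ofFn_inj.mp h
  have := congrFun this i
  cases h1 : g₁ i <;> cases h2 : g₂ i <;> simp_all


abbrev Wt (m : ℕ) := Option (Option (Bool × Fin (m+1)))

def Cst (m : ℕ) (b : Bool) (i : Fin (m+1)) : Wt m := some (some (b, i))

inductive Ed (m : ℕ) : Wt m → Fin 6 → Wt m → Prop
  | c : Ed m none 2 (Cst m false 0)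
  | d : Ed m none 3 (Cst m true 0)
  | step (b : Bool) (x : Fin 6) (hx : x = 0 ∨ x = 1) (i : ℕ) (h : i < m) :
      Ed m (Cst m b ⟨i, by omega⟩) x (Cst m b ⟨i+1, by omega⟩)
  | acc (b : Bool) : Ed m (Cst m b ⟨m, by omega⟩) (if b then 5 else 4) (some none)

-- determinism
lemma Ed_det (m : ℕ) : ∀ u a v v', Ed m u a v → Ed m u a v' → v = v' := by
  intro u a v v' h1 h2
  cases h1 <;> cases h2 <;> simp_all [Cst] <;> omega

-- no edges into the source
lemma Ed_src (m : ℕ) : ∀ u a, ¬ Ed m u a none := by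
  intro u a h
  cases h

lemma reach_chain (m : ℕ) (b : Bool) (B : List (Fin 6)) (hB : ∀ x ∈ B, x = 0 ∨ x = 1)
    (h : B.length ≤ m) :
    Reaches (Ed m) none (hd6 b :: B) (Cst m b ⟨B.length, by omega⟩) := by
  induction B using List.reverseRecOn with
  | nil =>
      have h0 : Reaches (Ed m) none ([] ++ [hd6 b]) (Cst m b ⟨0, by omega⟩) :=
        Reaches.snoc Reaches.nil (by
          cases b
          · exact (by simpa [hd6, Cst] using Ed.c (m := m))
          · exact (by simpa [hd6, Cst] using Ed.d (m := m)))
      simpa using h0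
  | append_singleton B x ih =>
      have hlen : B.length < m := by simpa using h
      have hx : x = 0 ∨ x = 1 := hB x (by simp)
      have hr := ih (fun y hy => hB y (by simp [hy])) (le_of_lt hlen)
      have : Reaches (Ed m) none ((hd6 b :: B) ++ [x]) (Cst m b ⟨B.length + 1, by omega⟩) :=
        Reaches.snoc hr (Ed.step b x hx B.length hlen)
      simpa using this

lemma reach_char (m : ℕ) : ∀ (w : List (Fin 6)) (v : Wt m), Reaches (Ed m) none w v →
    (v = none ∧ w = []) ∨
    (∃ (b : Bool) (i : ℕ) (h : i ≤ m) (B : List (Fin 6)), v = Cst m b ⟨i, by omega⟩ ∧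
      w = hd6 b :: B ∧ B.length = i ∧ (∀ x ∈ B, x = 0 ∨ x = 1)) ∨
    (v = some none ∧ w ∈ Lm m) := by
  intro w v h
  induction h with
  | nil => exact Or.inl ⟨rfl, rfl⟩
  | @snoc α u v' a hr e ih =>
      rcases ih with ⟨rfl, rfl⟩ | ⟨b, i, hi, B, rfl, rfl, hlen, hB⟩ | ⟨rfl, hw⟩
      · -- edge from none
        cases e with
        | c => exact Or.inr (Or.inl ⟨false, 0, by omega, [], by simp [Cst], by simp [hd6], by simp⟩)
        | d => exact Or.inr (Or.inl ⟨true, 0, by omega, [], by simp [Cst], by simp [hd6], by simp⟩)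
      · -- edge from chain state
        cases e with
        | step b' x hx j hj =>
            refine Or.inr (Or.inl ⟨b, i + 1, by omega, B ++ [a], rfl, by simp, by simp [hlen], ?_⟩)
            intro y hy
            rcases List.mem_append.mp hy with h | h
            · exact hB y h
            · simp at h; subst h; exact hx
        | acc b' =>
            refine Or.inr (Or.inr ⟨rfl, ?_⟩)
            refine ⟨B, by omega, hB, ?_⟩
            cases b
            · left; simp [hd6]
            · right; simp [hd6]
      · -- no edges from accept state
        cases e

lemma part2 (m : ℕ) (hm : 1 ≤ m) :
    ∃ (W : Type) (_ : Fintype W) (E : W → Fin 6 → W → Prop) (F : Set W) (s : W),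
        (∀ u a v v', E u a v → E u a v' → v = v') ∧
        (∀ u a, ¬ E u a s) ∧
        (∀ x : W, (∀ u a, ¬ E u a x) → x = s) ∧
        (∀ x : W, ∃ α, Reaches E s α x) ∧
        Fintype.card W ≤ 4 * m + 5 ∧
        Lang E F s = Lm m := by
  refine ⟨Wt m, inferInstance, Ed m, {some none}, none, Ed_det m, Ed_src m, ?_, ?_, ?_, ?_⟩
  · -- no-incoming implies source
    intro x hx
    match x with
    | none => rfl
    | some none =>
        exact absurd (by simpa [tl6] using Ed.acc (m := m) false) (by
          have := hx (Cst m false ⟨m, by omega⟩) 4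
          simpa using this)
    | some (some (b, i)) =>
        exfalso
        rcases Nat.eq_zero_or_pos i.1 with h0 | hpos
        · cases b
          · exact hx none 2 (by
              have := Ed.c (m := m)
              have hi : (⟨0, by omega⟩ : Fin (m+1)) = i := by
                apply Fin.ext; simp [h0]
              rw [← hi]; exact this)
          · exact hx none 3 (by
              have := Ed.d (m := m)
              have hi : (⟨0, by omega⟩ : Fin (m+1)) = i := by
                apply Fin.ext; simp [h0]
              rw [← hi]; exact this)
        · have hlt : i.1 - 1 < m := by omega
          have := Ed.step (m := m) b 0 (Or.inl rfl) (i.1 - 1) hlt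
          have hi : (⟨i.1 - 1 + 1, by omega⟩ : Fin (m+1)) = i := by
            apply Fin.ext; simp; omega
          rw [hi] at this
          exact hx _ 0 this
  · -- reachability
    intro x
    match x with
    | none => exact ⟨[], Reaches.nil⟩
    | some (some (b, i)) =>
        refine ⟨hd6 b :: List.replicate i.1 0, ?_⟩
        have := reach_chain m b (List.replicate i.1 0) (by simp) (by simp only [List.length_replicate]; omega)
        have hi : (⟨(List.replicate i.1 (0 : Fin 6)).length, by simp only [List.length_replicate]; omega⟩ : Fin (m+1)) = i := by
          apply Fin.ext; simp
        rwa [hi] at this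
    | some none =>
        refine ⟨hd6 false :: List.replicate m 0 ++ [4], ?_⟩
        have h1 := reach_chain m false (List.replicate m 0) (by simp) (by simp)
        have h2 : Ed m (Cst m false ⟨(List.replicate m (0:Fin 6)).length, by simp⟩) 4 (some none) := by
          have := Ed.acc (m := m) false
          simp only [if_neg Bool.false_ne_true] at this
          have hi : (⟨(List.replicate m (0:Fin 6)).length, by simp⟩ : Fin (m+1)) = ⟨m, by omega⟩ := by
            apply Fin.ext; simp
          rw [hi]; simpa using this
        have := Reaches.snoc h1 h2
        simpa using this
  · -- card
    simp [Fintype.card_option]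
    omega
  · -- language
    ext w
    constructor
    · rintro ⟨v, hv, hr⟩
      simp only [Set.mem_singleton_iff] at hv
      subst hv
      rcases reach_char m w _ hr with ⟨h, _⟩ | ⟨b, i, hi, B, h, _⟩ | ⟨_, h⟩
      · simp [Cst] at h
      · simp [Cst] at h
      · exact h
    · rintro ⟨α, hlen, hbin, h | h⟩
      · refine ⟨some none, rfl, ?_⟩
        subst h
        have h1 := reach_chain m false α hbin (by omega)
        have h2 : Ed m (Cst m false ⟨α.length, by omega⟩) 4 (some none) := by
          have := Ed.acc (m := m) false
          simp only [if_neg Bool.false_ne_true] at this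
          have hi : (⟨α.length, by omega⟩ : Fin (m+1)) = ⟨m, by omega⟩ := by
            apply Fin.ext; simp [hlen]
          rw [hi]; simpa using this
        have := Reaches.snoc h1 h2
        simpa [hd6] using this
      · refine ⟨some none, rfl, ?_⟩
        subst h
        have h1 := reach_chain m true α hbin (by omega)
        have h2 : Ed m (Cst m true ⟨α.length, by omega⟩) 5 (some none) := by
          have := Ed.acc (m := m) true
          simp only [if_pos rfl] at this
          have hi : (⟨α.length, by omega⟩ : Fin (m+1)) = ⟨m, by omega⟩ := by
            apply Fin.ext; simp [hlen]
          rw [hi]; simpa using this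
        have := Reaches.snoc h1 h2
        simpa [hd6] using this

def wordT (m : ℕ) : TT m → List (Fin 6)
  | none => []
  | some none => (2 : Fin 6) :: (List.replicate m 0 ++ [4])
  | some (some (b, ⟨_, g⟩)) => hd6 b :: encB g

lemma part1 (m : ℕ) (W : Type) (inst : Fintype W) (E : W → Fin 6 → W → Prop)
    (F : Set W) (s : W) (r : W → W → Prop)
    (hdet : ∀ u a v v', E u a v → E u a v' → v = v')
    (hs : ∀ u a, ¬ E u a s)
    (hW : WheelerRel E r) (hL : Lang E F s = Lm m) :
    2 ^ (m + 2) ≤ Fintype.card W := by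
  obtain ⟨⟨hirr, htrans, htot⟩, hA2, hA3, hA4⟩ := hW
  have key := wheeler_order hs ⟨hA2, hA3, hA4⟩ hdet
  have hEx : ∀ x : TT m, ∃ u, Reaches E s (wordT m x) u := by
    intro x
    match x with
    | none => exact ⟨s, Reaches.nil⟩
    | some none =>
        have hmem : wordT m (some none) ∈ Lm m := by
          have := mem_Lm m (List.replicate m 0) (fun x hx => Or.inl (List.eq_of_mem_replicate hx))
            (by simp) false
          simpa [wordT, hd6, tl6, List.append_assoc] using this
        rw [← hL] at hmem
        obtain ⟨w, _, hr⟩ := hmem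
        exact ⟨w, hr⟩
    | some (some (b, ⟨k, g⟩)) =>
        have hmem := mem_Lm m (encB g) (encB_bin g) (by rw [encB_len]; omega) b
        rw [← hL] at hmem
        obtain ⟨w, _, hr⟩ := hmem
        obtain ⟨u, hu, -⟩ := reaches_split hr
        exact ⟨u, hu⟩
  set f : TT m → W := fun x => (hEx x).choose with hfdef
  have hf : ∀ x, Reaches E s (wordT m x) (f x) := fun x => (hEx x).choose_spec
  have hMN : ∀ x y γ, f x = f y → wordT m x ++ γ ∈ Lm m → wordT m y ++ γ ∈ Lm m := by
    intro x y γ hfe hmem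
    rw [← hL] at hmem ⊢
    obtain ⟨w, hwF, hr⟩ := hmem
    obtain ⟨u, hu, hγ⟩ := reaches_split hr
    have h2 : Reaches E (f x) γ w := by rwa [reaches_det hdet hu (hf x)] at hγ
    exact ⟨w, hwF, reaches_append (hf y) (hfe ▸ h2)⟩
  have hdist : ∀ (b₁ b₂ : Bool) (k₁ k₂ : Fin (m+1)) (g₁ : Fin k₁ → Bool) (g₂ : Fin k₂ → Bool),
      (b₁ ≠ b₂ ∨ k₁ ≠ k₂) →
      f (some (some (b₁, ⟨k₁, g₁⟩))) ≠ f (some (some (b₂, ⟨k₂, g₂⟩))) := by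
    intro b₁ b₂ k₁ k₂ g₁ g₂ hne hfe
    have hm1 : wordT m (some (some (b₁, ⟨k₁, g₁⟩))) ++
        (List.replicate (m - (k₁:ℕ)) (0:Fin 6) ++ [tl6 b₁]) ∈ Lm m := by
      have := mem_Lm m (encB g₁) (encB_bin g₁) (by rw [encB_len]; omega) b₁
      simpa [wordT, encB_len] using this
    have hm2 := hMN _ _ _ hfe hm1
    rcases hne with hbb | hkk
    · cases b₁ <;> cases b₂ <;> (try exact hbb rfl)
      · exact Lm_not_34 m (encB g₂ ++ List.replicate (m - (k₁:ℕ)) 0)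
          (by simpa [wordT, hd6, tl6, List.append_assoc] using hm2)
      · exact Lm_not_25 m (encB g₂ ++ List.replicate (m - (k₁:ℕ)) 0)
          (by simpa [wordT, hd6, tl6, List.append_assoc] using hm2)
    · have hlen := Lm_len m hm2
      simp [wordT, encB_len] at hlen
      have hk1 : (k₁:ℕ) ≤ m := by omega
      exact hkk (Fin.ext (by omega))
  have hlab : ∀ (b : Bool) (k : Fin (m+1)) (g : Fin k → Bool),
      ∃ (u : W) (ℓ : Fin 6), E u ℓ (f (some (some (b, ⟨k, g⟩)))) ∧ ℓ < 4 := by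
    intro b k g
    have hr := hf (some (some (b, ⟨k, g⟩)))
    rcases List.eq_nil_or_concat (encB g) with hnil | ⟨δ, ℓ, hcat⟩
    · have hr' : Reaches E s ([] ++ [hd6 b]) (f (some (some (b, ⟨k, g⟩)))) := by
        simpa [wordT, hnil] using hr
      obtain ⟨u, -, e⟩ := reaches_snoc_inv hr'
      exact ⟨u, hd6 b, e, by cases b <;> simp [hd6] <;> decide⟩
    · have hℓ : ℓ = 0 ∨ ℓ = 1 := encB_bin g ℓ (by rw [hcat]; simp)
      have hr' : Reaches E s ((hd6 b :: δ) ++ [ℓ]) (f (some (some (b, ⟨k, g⟩)))) := by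
        simpa [wordT, hcat] using hr
      obtain ⟨u, -, e⟩ := reaches_snoc_inv hr'
      exact ⟨u, ℓ, e, by rcases hℓ with rfl | rfl <;> decide⟩
  have hlab4 : ∃ u, E u 4 (f (some none)) := by
    have hr' : Reaches E s ((2 :: List.replicate m 0) ++ [4]) (f (some none)) := by
      simpa [wordT] using hf (some none)
    obtain ⟨u, -, e⟩ := reaches_snoc_inv hr'
    exact ⟨u, e⟩
  have hne_acc : ∀ (b : Bool) (k : Fin (m+1)) (g : Fin k → Bool),
      f (some (some (b, ⟨k, g⟩))) ≠ f (some none) := by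
    intro b k g he
    obtain ⟨u, ℓ, e, hℓ⟩ := hlab b k g
    obtain ⟨u', e'⟩ := hlab4
    have := hA3 _ _ _ _ _ _ e e' hℓ
    rw [he] at this
    exact hirr _ this
  have hf_none : f none = s := reaches_nil_inv (hf none)
  have hne_s : ∀ x : TT m, wordT m x ≠ [] → f x ≠ f none := by
    intro x hx he
    obtain ⟨u, a, e⟩ := reaches_ne_nil_edge (hf x) hx
    rw [he, hf_none] at e
    exact hs u a e
  have hcore : ∀ (b : Bool) (k : Fin (m+1)) (g₁ g₂ : Fin k → Bool),
      List.Lex (· < ·) (encB g₁).reverse (encB g₂).reverse →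
      f (some (some (b, ⟨k, g₁⟩))) = f (some (some (b, ⟨k, g₂⟩))) → False := by
    intro b k g₁ g₂ hlex hfe
    have hlen : (encB g₁).reverse.length = (encB g₂).reverse.length := by simp [encB_len]
    cases b
    · -- c case: 2::B₁ < 3::B₁ < 2::B₂ ; mid = (true, g₁)
      have hc1 : ColexLt (wordT m (some (some (false, ⟨k, g₁⟩))))
          (wordT m (some (some (true, ⟨k, g₁⟩)))) := by
        show List.Lex _ _ _
        simp only [wordT, hd6, List.reverse_cons, if_true, if_false, Bool.false_eq_true]
        exact lex_append_right _ (by decide) [] []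
      have hc2 : ColexLt (wordT m (some (some (true, ⟨k, g₁⟩))))
          (wordT m (some (some (false, ⟨k, g₂⟩)))) := by
        show List.Lex _ _ _
        simp only [wordT, List.reverse_cons]
        exact lex_append_of_length_eq hlex hlen _ _
      rcases key _ _ _ _ (hf _) (hf _) hc1 with h1 | h1
      · rcases key _ _ _ _ (hf _) (hf _) hc2 with h2 | h2
        · exact hirr _ (hfe ▸ htrans _ _ _ h1 h2)
        · exact hdist true false k k g₁ g₂ (Or.inl (by simp)) h2
      · exact hdist false true k k g₁ g₁ (Or.inl (by simp)) h1
    · -- d case: 3::B₁ < 2::B₂ < 3::B₂ ; mid = (false, g₂)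
      have hc1 : ColexLt (wordT m (some (some (true, ⟨k, g₁⟩))))
          (wordT m (some (some (false, ⟨k, g₂⟩)))) := by
        show List.Lex _ _ _
        simp only [wordT, List.reverse_cons]
        exact lex_append_of_length_eq hlex hlen _ _
      have hc2 : ColexLt (wordT m (some (some (false, ⟨k, g₂⟩))))
          (wordT m (some (some (true, ⟨k, g₂⟩)))) := by
        show List.Lex _ _ _
        simp only [wordT, hd6, List.reverse_cons, if_true, if_false, Bool.false_eq_true]
        exact lex_append_right _ (by decide) [] []
      rcases key _ _ _ _ (hf _) (hf _) hc1 with h1 | h1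
      · rcases key _ _ _ _ (hf _) (hf _) hc2 with h2 | h2
        · exact hirr _ (hfe ▸ htrans _ _ _ h1 h2)
        · exact hdist false true k k g₂ g₂ (Or.inl (by simp)) h2
      · exact hdist true false k k g₁ g₂ (Or.inl (by simp)) h1
  have hinj : Function.Injective f := by
    intro x y hfe
    match x, y with
    | none, none => rfl
    | none, some y' =>
        exact absurd hfe.symm (hne_s (some y') (by
          match y' with
          | none => simp [wordT]
          | some (b, ⟨k, g⟩) => simp [wordT]))
    | some x', none =>
        exact absurd hfe (hne_s (some x') (by
          match x' with
          | none => simp [wordT]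
          | some (b, ⟨k, g⟩) => simp [wordT]))
    | some none, some none => rfl
    | some none, some (some (b, ⟨k, g⟩)) => exact absurd hfe.symm (hne_acc b k g)
    | some (some (b, ⟨k, g⟩)), some none => exact absurd hfe (hne_acc b k g)
    | some (some (b₁, ⟨k₁, g₁⟩)), some (some (b₂, ⟨k₂, g₂⟩)) =>
        obtain rfl : b₁ = b₂ := by
          by_contra hbb
          exact hdist b₁ b₂ k₁ k₂ g₁ g₂ (Or.inl hbb) hfe
        obtain rfl : k₁ = k₂ := by
          by_contra hkk
          exact hdist b₁ b₁ k₁ k₂ g₁ g₂ (Or.inr hkk) hfe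
        obtain rfl : g₁ = g₂ := by
          by_contra hgg
          have hBne : (encB g₁).reverse ≠ (encB g₂).reverse := by
            intro h
            exact hgg (encB_inj (List.reverse_injective h))
          rcases lex_total' hBne with hlx | hlx
          · exact hcore b₁ k₁ g₁ g₂ hlx hfe
          · exact hcore b₁ k₁ g₂ g₁ hlx hfe.symm
        rfl
  calc 2 ^ (m + 2) = Fintype.card (TT m) := (card_TT m).symm
    _ ≤ Fintype.card W := Fintype.card_le_of_injective f hinj

/-- Exponential blow-up: every Wheeler DFA recognizing `L_m` has at least `2^(m+2)`
states, while `L_m` is recognized by a DFA with `4m + 5 = O(m)` states. Hence the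
minimum WDFA equivalent to an acyclic DFA with `n` states has `Ω(2^(n/4))` states in
the worst case. -/
theorem stmt18 (m : ℕ) (hm : 1 ≤ m) :
    (∀ (W : Type) (_ : Fintype W) (E : W → Fin 6 → W → Prop) (F : Set W) (s : W)
        (r : W → W → Prop),
        (∀ u a v v', E u a v → E u a v' → v = v') →
        (∀ u a, ¬ E u a s) →
        (∀ x : W, (∀ u a, ¬ E u a x) → x = s) →
        (∀ x : W, ∃ α, Reaches E s α x) →
        WheelerRel E r →
        Lang E F s = Lm m →
        2 ^ (m + 2) ≤ Fintype.card W) ∧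
    (∃ (W : Type) (_ : Fintype W) (E : W → Fin 6 → W → Prop) (F : Set W) (s : W),
        (∀ u a v v', E u a v → E u a v' → v = v') ∧
        (∀ u a, ¬ E u a s) ∧
        (∀ x : W, (∀ u a, ¬ E u a x) → x = s) ∧
        (∀ x : W, ∃ α, Reaches E s α x) ∧
        Fintype.card W ≤ 4 * m + 5 ∧
        Lang E F s = Lm m) := by
  constructor
  · intro W inst E F s r hdet hs _ _ hW hL
    exact part1 m W inst E F s r hdet hs hW hL
  · exact part2 m hm
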